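/- arXiv:2201.10408 — 6 statements merged into one kernel-verified Lean document; each statement's English description precedes it below -/
import Mathlib

section
/- Let f* : X → Y be a model such that for every group g : X → Bool with μ_g(D) > 0 and every model h : X → Y, L(D, f*, g) ≤ L(D, h, g). Then f* is Bayes optimal with respect to D and ℓ. -/
open MeasureTheory

/-- The measure of a group `g` under a distribution `D` on `X × Y`:
`μ_g(D) = D {(x,y) | g x = true}`. -/
noncomputable def groupMeasure {X Y : Type} [MeasurableSpace (X × Y)]
    (D : Measure (X × Y)) (g : X → Bool) : ℝ :=
  (D {p : X × Y | g p.1 = true}).toReal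

/-- The group-conditional loss `L(D, f, g) = E_{(x,y)∼D}[ℓ(f x, y) | g x = true]`,
written on a finite type as the `g`-restricted sum divided by the mass of `g`. -/
noncomputable def condLoss {X Y : Type} [Fintype X] [Fintype Y] [MeasurableSpace (X × Y)]
    (D : Measure (X × Y)) (ℓ : Y → Y → ℝ) (f : X → Y) (g : X → Bool) : ℝ :=
  (∑ p : X × Y, if g p.1 = true then (D {p}).toReal * ℓ (f p.1) p.2 else 0)
    / groupMeasure D g

/-- A model `f` is Bayes optimal with respect to `D` and `ℓ` if for every `x` with
`D({x} × Y) > 0` and every `y`, `Σ_{y'} D{(x,y')}·ℓ(f x, y') ≤ Σ_{y'} D{(x,y')}·ℓ(y, y')`. -/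
def BayesOptimal {X Y : Type} [Fintype X] [Fintype Y] [MeasurableSpace (X × Y)]
    (D : Measure (X × Y)) (ℓ : Y → Y → ℝ) (f : X → Y) : Prop :=
  ∀ x : X, 0 < D {p : X × Y | p.1 = x} →
    ∀ y : Y, ∑ y' : Y, (D {(x, y')}).toReal * ℓ (f x) y'
      ≤ ∑ y' : Y, (D {(x, y')}).toReal * ℓ y y'


/-- a model with optimal loss on every group of positive measure is Bayes optimal. -/
theorem stmt_1 {X Y : Type} [Fintype X] [Fintype Y] [Nonempty X] [Nonempty Y]
    [MeasurableSpace (X × Y)] [MeasurableSingletonClass (X × Y)]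
    (D : Measure (X × Y)) [IsProbabilityMeasure D]
    (ℓ : Y → Y → ℝ) (hℓ : ∀ yhat y : Y, 0 ≤ ℓ yhat y ∧ ℓ yhat y ≤ 1)
    (fstar : X → Y)
    (hgrp : ∀ g : X → Bool, 0 < groupMeasure D g →
      ∀ h : X → Y, condLoss D ℓ fstar g ≤ condLoss D ℓ h g) :
    BayesOptimal D ℓ fstar := by
  classical
  intro x hx y
  set g : X → Bool := fun x' => decide (x' = x) with hg
  have hset : {p : X × Y | g p.1 = true} = {p : X × Y | p.1 = x} := by
    ext p; simp [hg]
  have hμ : 0 < groupMeasure D g := by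
    rw [groupMeasure, hset]
    have hfin : D {p : X × Y | p.1 = x} ≠ ⊤ := measure_ne_top _ _
    exact ENNReal.toReal_pos hx.ne' hfin
  have key := hgrp g hμ (fun _ => y)
  rw [condLoss, condLoss, div_le_div_iff_of_pos_right hμ] at key
  have hsum : ∀ f : X → Y,
      (∑ p : X × Y, if g p.1 = true then (D {p}).toReal * ℓ (f p.1) p.2 else 0)
        = ∑ y' : Y, (D {(x, y')}).toReal * ℓ (f x) y' := by
    intro f
    rw [Fintype.sum_prod_type]
    rw [Finset.sum_eq_single x]
    · simp [hg]
    · intro b _ hb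
      simp [hg, hb]
    · simp
  rwa [hsum fstar, hsum (fun _ => y)] at key
end

section
/- Let f : X → Y be a model and suppose the pair (g,h) is a (μ,Δ)-certificate of sub-optimality for f with μ > 0 and Δ > 0. Then the model f' := ListUpdate(f,(g,h)) satisfies L(D, f') ≤ L(D, f) − μ·Δ. -/
open MeasureTheory

/-- The overall loss `L(D,f) = E_{(x,y)∼D}[ℓ(f x, y)]` on a finite type. -/
noncomputable def totalLoss {X Y : Type} [Fintype X] [Fintype Y] [MeasurableSpace (X × Y)]
    (D : Measure (X × Y)) (ℓ : Y → Y → ℝ) (f : X → Y) : ℝ :=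
  ∑ p : X × Y, (D {p}).toReal * ℓ (f p.1) p.2

/-- `ListUpdate(f,(g,h))`: predict with `h` on group `g`, and with `f` elsewhere. -/
def listUpdate {X Y : Type} (f h : X → Y) (g : X → Bool) : X → Y :=
  fun x => if g x then h x else f x

/-- `(g,h)` is a `(μ,Δ)`-certificate of sub-optimality for `f` under `D`:
`μ_g(D) ≥ μ` and `L(D,f,g) ≥ L(D,h,g) + Δ`. -/
def IsCertificate {X Y : Type} [Fintype X] [Fintype Y] [MeasurableSpace (X × Y)]
    (D : Measure (X × Y)) (ℓ : Y → Y → ℝ) (f : X → Y)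
    (g : X → Bool) (h : X → Y) (μ Δ : ℝ) : Prop :=
  μ ≤ groupMeasure D g ∧ condLoss D ℓ h g + Δ ≤ condLoss D ℓ f g

/-- `f` is `(ε,C)`-Bayes optimal: for every `(g,h) ∈ C` with `μ_g(D) > 0`,
`L(D,f,g) ≤ L(D,h,g) + ε/μ_g(D)`. -/
def ApproxBayesOptimal {X Y : Type} [Fintype X] [Fintype Y] [MeasurableSpace (X × Y)]
    (D : Measure (X × Y)) (ℓ : Y → Y → ℝ)
    (C : Set ((X → Bool) × (X → Y))) (ε : ℝ) (f : X → Y) : Prop :=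
  ∀ gh ∈ C, 0 < groupMeasure D gh.1 →
    condLoss D ℓ f gh.1 ≤ condLoss D ℓ gh.2 gh.1 + ε / groupMeasure D gh.1

/-- updating with a `(μ,Δ)`-certificate of sub-optimality decreases the
overall loss by at least `μ·Δ`. -/
theorem stmt_6 {X Y : Type} [Fintype X] [Fintype Y] [Nonempty X] [Nonempty Y]
    [MeasurableSpace (X × Y)] [MeasurableSingletonClass (X × Y)]
    (D : Measure (X × Y)) [IsProbabilityMeasure D]
    (ℓ : Y → Y → ℝ) (hℓ : ∀ yhat y : Y, 0 ≤ ℓ yhat y ∧ ℓ yhat y ≤ 1)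
    (f h : X → Y) (g : X → Bool) (μ Δ : ℝ) (hμ : 0 < μ) (hΔ : 0 < Δ)
    (hcert : IsCertificate D ℓ f g h μ Δ) :
    totalLoss D ℓ (listUpdate f h g) ≤ totalLoss D ℓ f - μ * Δ := by
  obtain ⟨hμle, hcond⟩ := hcert
  set m := groupMeasure D g with hm
  have hm0 : 0 < m := lt_of_lt_of_le hμ hμle
  set Sf := ∑ p : X × Y, if g p.1 = true then (D {p}).toReal * ℓ (f p.1) p.2 else 0 with hSf
  set Sh := ∑ p : X × Y, if g p.1 = true then (D {p}).toReal * ℓ (h p.1) p.2 else 0 with hSh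
  have hkey : Sh + Δ * m ≤ Sf := by
    have := mul_le_mul_of_nonneg_right hcond (le_of_lt hm0)
    rw [condLoss, condLoss] at this
    rw [add_mul, div_mul_cancel₀ _ (ne_of_gt hm0), div_mul_cancel₀ _ (ne_of_gt hm0)] at this
    exact this
  have hΔm : Δ * μ ≤ Δ * m := mul_le_mul_of_nonneg_left hμle (le_of_lt hΔ)
  have hsplit : ∀ f' : X → Y, totalLoss D ℓ f' =
      (∑ p : X × Y, if g p.1 = true then (D {p}).toReal * ℓ (f' p.1) p.2 else 0)
      + (∑ p : X × Y, if g p.1 = true then 0 else (D {p}).toReal * ℓ (f' p.1) p.2) := by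
    intro f'
    rw [totalLoss, ← Finset.sum_add_distrib]
    refine Finset.sum_congr rfl fun p _ => ?_
    by_cases hg : g p.1 = true <;> simp [hg]
  have h1 := hsplit (listUpdate f h g)
  have h2 := hsplit f
  have e1 : (∑ p : X × Y, if g p.1 = true then (D {p}).toReal * ℓ (listUpdate f h g p.1) p.2 else 0) = Sh := by
    refine Finset.sum_congr rfl fun p _ => ?_
    by_cases hg : g p.1 = true <;> simp [listUpdate, hg]
  have e2 : (∑ p : X × Y, if g p.1 = true then 0 else (D {p}).toReal * ℓ (listUpdate f h g p.1) p.2)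
      = (∑ p : X × Y, if g p.1 = true then 0 else (D {p}).toReal * ℓ (f p.1) p.2) := by
    refine Finset.sum_congr rfl fun p _ => ?_
    by_cases hg : g p.1 = true <;> simp [listUpdate, hg]
  rw [h1, h2, e1, e2]
  nlinarith [hkey, hΔm]
end

section
/- Fix ε > 0. Let f_0, f_1, …, f_T : X → Y be a sequence of models such that for each 1 ≤ i ≤ T, f_i = ListUpdate(f_{i−1},(g_i,h_i)) where (g_i,h_i) is a (μ_i,Δ_i)-certificate of sub-optimality for f_{i−1} with μ_i > 0, Δ_i > 0, and μ_i·Δ_i ≥ ε. Then T ≤ L(D, f_0)/ε; in particular T ≤ 1/ε. -/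
open MeasureTheory

lemma sum_toReal_one {α : Type} [Fintype α] [MeasurableSpace α] [MeasurableSingletonClass α]
    (D : Measure α) [IsProbabilityMeasure D] : ∑ p : α, (D {p}).toReal = 1 := by
  have h1 : D (⋃ p ∈ (Finset.univ : Finset α), {p}) = ∑ p : α, D {p} := by
    apply measure_biUnion_finset
    · intro a _ b _ hab
      simp [Function.onFun, Set.disjoint_singleton, hab]
    · intro i _; exact measurableSet_singleton i
  have h2 : (⋃ p ∈ (Finset.univ : Finset α), {p} : Set α) = Set.univ := by
    ext x; simp
  rw [h2, measure_univ] at h1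
  rw [← ENNReal.toReal_sum (fun a _ => measure_ne_top D _), ← h1]
  simp

lemma totalLoss_nonneg {X Y : Type} [Fintype X] [Fintype Y] [MeasurableSpace (X × Y)]
    (D : Measure (X × Y)) (ℓ : Y → Y → ℝ) (hℓ : ∀ yhat y : Y, 0 ≤ ℓ yhat y ∧ ℓ yhat y ≤ 1)
    (f : X → Y) : 0 ≤ totalLoss D ℓ f := by
  apply Finset.sum_nonneg
  intro p _
  exact mul_nonneg ENNReal.toReal_nonneg (hℓ _ _).1

lemma totalLoss_le_one {X Y : Type} [Fintype X] [Fintype Y] [MeasurableSpace (X × Y)]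
    [MeasurableSingletonClass (X × Y)]
    (D : Measure (X × Y)) [IsProbabilityMeasure D]
    (ℓ : Y → Y → ℝ) (hℓ : ∀ yhat y : Y, 0 ≤ ℓ yhat y ∧ ℓ yhat y ≤ 1)
    (f : X → Y) : totalLoss D ℓ f ≤ 1 := by
  calc totalLoss D ℓ f ≤ ∑ p : X × Y, (D {p}).toReal := by
        apply Finset.sum_le_sum
        intro p _
        nlinarith [(hℓ (f p.1) p.2).2, ENNReal.toReal_nonneg (a := D {p})]
    _ = 1 := sum_toReal_one D

lemma step_decrease {X Y : Type} [Fintype X] [Fintype Y] [MeasurableSpace (X × Y)]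
    (D : Measure (X × Y)) (ℓ : Y → Y → ℝ)
    (f : X → Y) (g : X → Bool) (h : X → Y) (μ Δ ε : ℝ)
    (hc : IsCertificate D ℓ f g h μ Δ) (hμ : 0 < μ) (hΔ : 0 < Δ) (hε : ε ≤ μ * Δ) :
    totalLoss D ℓ (listUpdate f h g) + ε ≤ totalLoss D ℓ f := by
  obtain ⟨hμle, hcond⟩ := hc
  have hgm : 0 < groupMeasure D g := lt_of_lt_of_le hμ hμle
  set S : (X → Y) → ℝ :=
    fun f' => ∑ p : X × Y, if g p.1 = true then (D {p}).toReal * ℓ (f' p.1) p.2 else 0 with hS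
  have hdiff : totalLoss D ℓ f - totalLoss D ℓ (listUpdate f h g) = S f - S h := by
    rw [totalLoss, totalLoss, hS, ← Finset.sum_sub_distrib, ← Finset.sum_sub_distrib]
    apply Finset.sum_congr rfl
    intro p _
    by_cases hg : g p.1 = true <;> simp [listUpdate, hg]
  have hSf : S f = condLoss D ℓ f g * groupMeasure D g := by
    rw [condLoss, div_mul_cancel₀ _ (ne_of_gt hgm)]
  have hSh : S h = condLoss D ℓ h g * groupMeasure D g := by
    rw [condLoss, div_mul_cancel₀ _ (ne_of_gt hgm)]
  have key : ε ≤ S f - S h := by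
    rw [hSf, hSh, ← sub_mul]
    calc ε ≤ μ * Δ := hε
      _ ≤ groupMeasure D g * Δ := by nlinarith
      _ ≤ (condLoss D ℓ f g - condLoss D ℓ h g) * groupMeasure D g := by nlinarith
  linarith

/-- any sequence of ListUpdate steps, each driven by a `(μᵢ,Δᵢ)`-certificate of
sub-optimality with `μᵢ·Δᵢ ≥ ε`, has length at most `L(D,f₀)/ε ≤ 1/ε`. -/
theorem stmt_7 {X Y : Type} [Fintype X] [Fintype Y] [Nonempty X] [Nonempty Y]
    [MeasurableSpace (X × Y)] [MeasurableSingletonClass (X × Y)]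
    (D : Measure (X × Y)) [IsProbabilityMeasure D]
    (ℓ : Y → Y → ℝ) (hℓ : ∀ yhat y : Y, 0 ≤ ℓ yhat y ∧ ℓ yhat y ≤ 1)
    (ε : ℝ) (hε : 0 < ε) (T : ℕ)
    (f : ℕ → X → Y) (g : ℕ → X → Bool) (h : ℕ → X → Y) (μ Δ : ℕ → ℝ)
    (hstep : ∀ i : ℕ, 1 ≤ i → i ≤ T →
      f i = listUpdate (f (i - 1)) (h i) (g i) ∧
      IsCertificate D ℓ (f (i - 1)) (g i) (h i) (μ i) (Δ i) ∧
      0 < μ i ∧ 0 < Δ i ∧ ε ≤ μ i * Δ i) :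
    (T : ℝ) ≤ totalLoss D ℓ (f 0) / ε ∧ (T : ℝ) ≤ 1 / ε := by

  have claim : ∀ i : ℕ, i ≤ T → totalLoss D ℓ (f i) + i * ε ≤ totalLoss D ℓ (f 0) := by
    intro i
    induction i with
    | zero => intro _; simp
    | succ n ih =>
      intro hle
      have hn : n ≤ T := Nat.le_of_succ_le hle
      obtain ⟨hupd, hcert, hμ, hΔ, hεle⟩ := hstep (n + 1) (Nat.le_add_left 1 n) hle
      simp only [Nat.add_sub_cancel] at hupd hcert
      have hdec := step_decrease D ℓ (f n) (g (n+1)) (h (n+1)) (μ (n+1)) (Δ (n+1)) ε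
        hcert hμ hΔ hεle
      rw [← hupd] at hdec
      have := ih hn
      push_cast
      push_cast at this
      linarith
  have hT := claim T le_rfl
  have h0 : 0 ≤ totalLoss D ℓ (f T) := totalLoss_nonneg D ℓ hℓ (f T)
  have h1 : totalLoss D ℓ (f 0) ≤ 1 := totalLoss_le_one D ℓ hℓ (f 0)
  constructor
  · rw [le_div_iff₀ hε]; linarith
  · rw [le_div_iff₀ hε]; linarith
end

section
/- Let f : X → Bool be a model and K a set of ternary models p : X → Option Bool. If p* ∈ K minimizes the expected induced cost E_{(x,y)∼D}[c^f_{(x,y)}(p x)] over p ∈ K, then p* maximizes E_{(x,y)∼D}[1[g_p x = true]·(1[f x ≠ y] − 1[h_p x ≠ y])] over p ∈ K; consequently, for every p ∈ K with μ_{g_p}(D) > 0 and μ_{g_{p*}}(D) > 0, μ_{g_{p*}}(D)·(L(D,f,g_{p*}) − L(D,h_{p*},g_{p*})) ≥ μ_{g_p}(D)·(L(D,f,g_p) − L(D,h_p,g_p)). -/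
open MeasureTheory

/-- The 0-1 loss on binary labels: `ℓ(yhat, y) = 1[yhat ≠ y]`. -/
noncomputable def loss01 : Bool → Bool → ℝ := fun a b => if a ≠ b then 1 else 0

/-- The group derived from a ternary model `p : X → Option Bool`:
`g_p x = true` iff `p x ≠ none` (i.e. `p` does not defer on `x`). -/
def derivedGroup {X : Type} (p : X → Option Bool) : X → Bool := fun x => (p x).isSome

/-- The model derived from a ternary model `p`: `h_p x = b` if `p x = some b`, and
`h_p x = false` if `p x = none`. -/
def derivedModel {X : Type} (p : X → Option Bool) : X → Bool := fun x => (p x).getD false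

/-- The induced costs of a model `f`: deferring costs `0`; predicting `b` costs `1` if `f`
is right and `b` is wrong, `−1` if `b` is right and `f` is wrong, and `0` otherwise. -/
noncomputable def inducedCost {X : Type} (f : X → Bool) (xy : X × Bool) : Option Bool → ℝ
  | none => 0
  | some b =>
      if f xy.1 = xy.2 ∧ b ≠ xy.2 then 1
      else if b = xy.2 ∧ f xy.1 ≠ xy.2 then -1
      else 0


lemma ptwise_cost {X : Type} (f : X → Bool) (xy : X × Bool) (o : Option Bool) :
    inducedCost f xy o =
      -(if o.isSome = true then
          (if f xy.1 ≠ xy.2 then (1:ℝ) else 0) - (if o.getD false ≠ xy.2 then (1:ℝ) else 0)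
        else 0) := by
  cases o with
  | none => simp [inducedCost]
  | some b =>
    simp only [inducedCost, Option.isSome_some, Option.getD_some, if_true]
    cases hb : b <;> cases hy : xy.2 <;> cases hf : f xy.1 <;> norm_num

lemma groupMeasure_eq_sum {X : Type} [Fintype X] [MeasurableSpace (X × Bool)]
    [MeasurableSingletonClass (X × Bool)] (D : Measure (X × Bool)) [IsProbabilityMeasure D]
    (g : X → Bool) :
    groupMeasure D g = ∑ q : X × Bool, (if g q.1 = true then (D {q}).toReal else 0) := by
  classical
  have h1 : {p : X × Bool | g p.1 = true}
      = ⋃ q ∈ (Finset.univ.filter (fun q : X × Bool => g q.1 = true)), {q} := by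
    ext q; simp
  rw [groupMeasure, h1, measure_biUnion_finset]
  · rw [ENNReal.toReal_sum (fun q _ => measure_ne_top D _)]
    rw [Finset.sum_filter]
  · intro a _ b _ hab
    simp [Set.disjoint_singleton, hab]
  · intro b _; exact measurableSet_singleton b

/-- a minimizer `p*` over `K` of the expected induced cost maximizes
`E[1[g_p x]·(1[f x ≠ y] − 1[h_p x ≠ y])]` over `K`; consequently it maximizes
`μ_{g_p}(D)·(L(D,f,g_p) − L(D,h_p,g_p))` among `p ∈ K` whose derived group has positive
measure (`p*`'s included). -/
theorem stmt_12 {X : Type} [Fintype X] [Nonempty X]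
    [MeasurableSpace (X × Bool)] [MeasurableSingletonClass (X × Bool)]
    (D : Measure (X × Bool)) [IsProbabilityMeasure D]
    (f : X → Bool) (K : Set (X → Option Bool))
    (pstar : X → Option Bool) (hmem : pstar ∈ K)
    (hmin : ∀ p ∈ K,
      (∑ q : X × Bool, (D {q}).toReal * inducedCost f q (pstar q.1))
        ≤ ∑ q : X × Bool, (D {q}).toReal * inducedCost f q (p q.1)) :
    (∀ p ∈ K,
        (∑ q : X × Bool, (D {q}).toReal *
          (if derivedGroup p q.1 = true then
             (if f q.1 ≠ q.2 then (1 : ℝ) else 0)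
               - (if derivedModel p q.1 ≠ q.2 then (1 : ℝ) else 0)
           else 0))
        ≤ ∑ q : X × Bool, (D {q}).toReal *
          (if derivedGroup pstar q.1 = true then
             (if f q.1 ≠ q.2 then (1 : ℝ) else 0)
               - (if derivedModel pstar q.1 ≠ q.2 then (1 : ℝ) else 0)
           else 0))
    ∧ (∀ p ∈ K, 0 < groupMeasure D (derivedGroup p) →
        0 < groupMeasure D (derivedGroup pstar) →
        groupMeasure D (derivedGroup p) *
            (condLoss D loss01 f (derivedGroup p)
              - condLoss D loss01 (derivedModel p) (derivedGroup p))
          ≤ groupMeasure D (derivedGroup pstar) *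
              (condLoss D loss01 f (derivedGroup pstar)
                - condLoss D loss01 (derivedModel pstar) (derivedGroup pstar))) := by
  classical
  -- the indicator-sum equals minus the cost sum
  have hsum : ∀ p : X → Option Bool,
      (∑ q : X × Bool, (D {q}).toReal *
        (if derivedGroup p q.1 = true then
           (if f q.1 ≠ q.2 then (1 : ℝ) else 0)
             - (if derivedModel p q.1 ≠ q.2 then (1 : ℝ) else 0)
         else 0))
      = -(∑ q : X × Bool, (D {q}).toReal * inducedCost f q (p q.1)) := by
    intro p
    rw [← Finset.sum_neg_distrib]
    refine Finset.sum_congr rfl (fun q _ => ?_)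
    rw [ptwise_cost f q (p q.1)]
    simp [derivedGroup, derivedModel, mul_comm]
    split_ifs <;> simp_all
  have part1 : ∀ p ∈ K,
      (∑ q : X × Bool, (D {q}).toReal *
        (if derivedGroup p q.1 = true then
           (if f q.1 ≠ q.2 then (1 : ℝ) else 0)
             - (if derivedModel p q.1 ≠ q.2 then (1 : ℝ) else 0)
         else 0))
      ≤ ∑ q : X × Bool, (D {q}).toReal *
        (if derivedGroup pstar q.1 = true then
           (if f q.1 ≠ q.2 then (1 : ℝ) else 0)
             - (if derivedModel pstar q.1 ≠ q.2 then (1 : ℝ) else 0)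
         else 0) := by
    intro p hp
    rw [hsum p, hsum pstar]
    exact neg_le_neg (hmin p hp)
  refine ⟨part1, ?_⟩
  -- μ_g (Lf - Lh) equals the indicator sum
  have key : ∀ p : X → Option Bool, 0 < groupMeasure D (derivedGroup p) →
      groupMeasure D (derivedGroup p) *
        (condLoss D loss01 f (derivedGroup p)
          - condLoss D loss01 (derivedModel p) (derivedGroup p))
      = ∑ q : X × Bool, (D {q}).toReal *
          (if derivedGroup p q.1 = true then
             (if f q.1 ≠ q.2 then (1 : ℝ) else 0)
               - (if derivedModel p q.1 ≠ q.2 then (1 : ℝ) else 0)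
           else 0) := by
    intro p hμ
    rw [condLoss, condLoss, div_sub_div_same,
      mul_div_cancel₀ _ (ne_of_gt hμ), ← Finset.sum_sub_distrib]
    refine Finset.sum_congr rfl (fun q _ => ?_)
    by_cases h : derivedGroup p q.1 = true <;> simp [h, loss01, mul_sub]
  intro p hp hμp hμstar
  rw [key p hμp, key pstar hμstar]
  exact part1 p hp
end

section
/- Let D = ((x_1,y_1),…,(x_n,y_n)) be a dataset of size n ≥ 1 with binary labels and 0-1 loss, and let f, h : X → Bool be models. Let I¹ := {i : h x_i = y_i and f x_i ≠ y_i}, I⁰ := {i : h x_i ≠ y_i and f x_i = y_i}, m := |I¹| + |I⁰|, and assume m > 0. Let D_h be the dataset of size m consisting of the relabeled examples (x_i, true) for i ∈ I¹ and (x_i, false) for i ∈ I⁰. Then for every group g : X → Bool: (i) Σ_{i=1}^n 1[g x_i = true]·(1[f x_i ≠ y_i] − 1[h x_i ≠ y_i]) = |{i ∈ I¹ : g x_i = true}| − |{i ∈ I⁰ : g x_i = true}|, and (ii) m · L(D_h, g) = |I¹| − |{i ∈ I¹ : g x_i = true}| + |{i ∈ I⁰ : g x_i = true}|, where L(D_h,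 g) is the empirical 0-1 loss of g, viewed as a Bool-valued predictor, on the dataset D_h. -/
/-- The empirical 0-1 loss of a Bool-valued predictor `g` on a dataset of labelled
examples given as a multiset: `L(S,g) = (Σ_{(x,y) ∈ S} 1[g x ≠ y]) / |S|`. -/
noncomputable def msLoss {X : Type} (S : Multiset (X × Bool)) (g : X → Bool) : ℝ :=
  (S.map fun q => if g q.1 ≠ q.2 then (1 : ℝ) else 0).sum / (Multiset.card S : ℝ)

/-- with `I¹ = {i : h x_i = y_i ≠ f x_i}`, `I⁰ = {i : h x_i ≠ y_i = f x_i}`,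
`m = |I¹| + |I⁰| > 0`, and `D_h` the relabeled dataset `{(x_i, true) : i ∈ I¹} ∪
{(x_i, false) : i ∈ I⁰}`, for every group `g`:
(i) `Σ_i 1[g x_i]·(1[f x_i ≠ y_i] − 1[h x_i ≠ y_i]) = |{i ∈ I¹ : g x_i}| − |{i ∈ I⁰ : g x_i}|`,
and (ii) `m·L(D_h, g) = |I¹| − |{i ∈ I¹ : g x_i}| + |{i ∈ I⁰ : g x_i}|`. -/
theorem stmt_14 {X : Type} (n : ℕ) (hn : 1 ≤ n) (D : Fin n → X × Bool) (f h : X → Bool)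
    (I1 I0 : Finset (Fin n))
    (hI1 : I1 = Finset.univ.filter fun i => h (D i).1 = (D i).2 ∧ f (D i).1 ≠ (D i).2)
    (hI0 : I0 = Finset.univ.filter fun i => h (D i).1 ≠ (D i).2 ∧ f (D i).1 = (D i).2)
    (m : ℕ) (hm : m = I1.card + I0.card) (hmpos : 0 < m)
    (Dh : Multiset (X × Bool))
    (hDh : Dh = I1.val.map (fun i => ((D i).1, true))
              + I0.val.map (fun i => ((D i).1, false))) :
    ∀ g : X → Bool,
      ((∑ i : Fin n, if g (D i).1 = true then
            (if f (D i).1 ≠ (D i).2 then (1 : ℝ) else 0)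
              - (if h (D i).1 ≠ (D i).2 then (1 : ℝ) else 0)
          else 0)
        = ((I1.filter fun i => g (D i).1 = true).card : ℝ)
            - ((I0.filter fun i => g (D i).1 = true).card : ℝ))
      ∧ ((m : ℝ) * msLoss Dh g
          = (I1.card : ℝ) - ((I1.filter fun i => g (D i).1 = true).card : ℝ)
              + ((I0.filter fun i => g (D i).1 = true).card : ℝ)) := by
  intro g
  have hcard : Multiset.card Dh = m := by
    subst hDh; simp [hm]
  constructor
  · have hterm : ∀ i : Fin n,
        (if g (D i).1 = true then
            (if f (D i).1 ≠ (D i).2 then (1 : ℝ) else 0)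
              - (if h (D i).1 ≠ (D i).2 then (1 : ℝ) else 0)
          else 0)
        = (if (h (D i).1 = (D i).2 ∧ f (D i).1 ≠ (D i).2) ∧ g (D i).1 = true then (1:ℝ) else 0)
          - (if (h (D i).1 ≠ (D i).2 ∧ f (D i).1 = (D i).2) ∧ g (D i).1 = true then (1:ℝ) else 0) := by
      intro i
      by_cases hg : g (D i).1 = true <;>
        by_cases h1 : h (D i).1 = (D i).2 <;>
          by_cases h2 : f (D i).1 = (D i).2 <;> simp [hg, h1, h2]
    rw [Finset.sum_congr rfl (fun i _ => hterm i), Finset.sum_sub_distrib]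
    rw [Finset.sum_boole, Finset.sum_boole]
    simp [hI1, hI0, Finset.filter_filter]
  · have hDhne : (m : ℝ) ≠ 0 := Nat.cast_ne_zero.mpr hmpos.ne'
    rw [msLoss, hcard, mul_div_cancel₀ _ hDhne]
    subst hDh
    rw [Multiset.map_add, Multiset.sum_add, Multiset.map_map, Multiset.map_map]
    have h1 : ((I1.val.map fun i => if g (D i).1 ≠ true then (1:ℝ) else 0)).sum
        = (I1.card : ℝ) - ((I1.filter fun i => g (D i).1 = true).card : ℝ) := by
      have : ((I1.val.map fun i => if g (D i).1 ≠ true then (1:ℝ) else 0)).sum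
          = ∑ i ∈ I1, if ¬ (g (D i).1 = true) then (1:ℝ) else 0 := rfl
      rw [this, Finset.sum_boole, Finset.filter_not]
      simp [Finset.card_sdiff_of_subset (Finset.filter_subset _ _),
        Nat.cast_sub (Finset.card_le_card (Finset.filter_subset _ _))]
    have h0 : ((I0.val.map fun i => if g (D i).1 ≠ false then (1:ℝ) else 0)).sum
        = ((I0.filter fun i => g (D i).1 = true).card : ℝ) := by
      have : ((I0.val.map fun i => if g (D i).1 ≠ false then (1:ℝ) else 0)).sum
          = ∑ i ∈ I0, if g (D i).1 ≠ false then (1:ℝ) else 0 := rfl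
      rw [this]
      simp [Finset.sum_boole]
    simp only [Function.comp] at *
    rw [h1, h0]
end

section
/- Let D = ((x_1,y_1),…,(x_n,y_n)) be a dataset of size n ≥ 1 with binary labels and 0-1 loss, and let f, h : X → Bool be models. Let I¹ := {i : h x_i = y_i and f x_i ≠ y_i}, I⁰ := {i : h x_i ≠ y_i and f x_i = y_i}, assume |I¹| + |I⁰| > 0, and let D_h be the dataset consisting of the relabeled examples (x_i, true) for i ∈ I¹ and (x_i, false) for i ∈ I⁰. Let G be a set of groups. If g* ∈ G minimizes the empirical 0-1 loss L(D_h, g) over g ∈ G (viewing each g as a Bool-valued predictor on D_h), then g* maximizes Φ(g) := (1/n) Σ_{i=1}^n 1[g x_i = true]·(1[f x_i ≠ y_i] − 1[h x_i ≠ y_i]) over g ∈ G; in particular, for every g ∈ G such that both {i : g x_i = true} and {i : g* x_i = true} are nonempty, μ_D(g*)·(L(D,f,g*) − L(D,h,g*)) ≥ μ_D(g)·(L(D,f,g) − L(D,h,g)). -/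
/-- The empirical measure of a group `g` on a dataset `D`: `μ_D(g) = |{i : g x_i = true}|/n`. -/
noncomputable def empMeasure {X : Type} {n : ℕ} (D : Fin n → X × Bool) (g : X → Bool) : ℝ :=
  ((Finset.univ.filter fun i => g (D i).1 = true).card : ℝ) / n

/-- The empirical group-conditional 0-1 loss
`L(D,f,g) = (Σ_{i : g x_i = true} 1[f x_i ≠ y_i]) / |{i : g x_i = true}|`. -/
noncomputable def empCondLoss {X : Type} {n : ℕ} (D : Fin n → X × Bool)
    (f : X → Bool) (g : X → Bool) : ℝ :=
  (∑ i ∈ Finset.univ.filter (fun i => g (D i).1 = true),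
      (if f (D i).1 ≠ (D i).2 then (1 : ℝ) else 0))
    / ((Finset.univ.filter fun i => g (D i).1 = true).card : ℝ)

/-- `Φ(g) = (1/n) Σ_i 1[g x_i]·(1[f x_i ≠ y_i] − 1[h x_i ≠ y_i])`. -/
noncomputable def Phi {X : Type} {n : ℕ} (D : Fin n → X × Bool) (f h : X → Bool)
    (g : X → Bool) : ℝ :=
  (1 / n : ℝ) * ∑ i : Fin n,
    if g (D i).1 = true then
      (if f (D i).1 ≠ (D i).2 then (1 : ℝ) else 0)
        - (if h (D i).1 ≠ (D i).2 then (1 : ℝ) else 0)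
    else 0

/-- a minimizer `g*` over `G` of the empirical 0-1 loss on the relabeled
dataset `D_h` maximizes `Φ(g)` over `G`; in particular, for groups nonempty on the data,
`μ_D(g*)·(L(D,f,g*) − L(D,h,g*)) ≥ μ_D(g)·(L(D,f,g) − L(D,h,g))`. -/
theorem stmt_15 {X : Type} (n : ℕ) (hn : 1 ≤ n) (D : Fin n → X × Bool) (f h : X → Bool)
    (I1 I0 : Finset (Fin n))
    (hI1 : I1 = Finset.univ.filter fun i => h (D i).1 = (D i).2 ∧ f (D i).1 ≠ (D i).2)
    (hI0 : I0 = Finset.univ.filter fun i => h (D i).1 ≠ (D i).2 ∧ f (D i).1 = (D i).2)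
    (hmpos : 0 < I1.card + I0.card)
    (Dh : Multiset (X × Bool))
    (hDh : Dh = I1.val.map (fun i => ((D i).1, true))
              + I0.val.map (fun i => ((D i).1, false)))
    (G : Set (X → Bool)) (gstar : X → Bool) (hmemG : gstar ∈ G)
    (hmin : ∀ g ∈ G, msLoss Dh gstar ≤ msLoss Dh g) :
    (∀ g ∈ G, Phi D f h g ≤ Phi D f h gstar)
    ∧ (∀ g ∈ G,
        (Finset.univ.filter fun i => g (D i).1 = true).Nonempty →
        (Finset.univ.filter fun i => gstar (D i).1 = true).Nonempty →
        empMeasure D g * (empCondLoss D f g - empCondLoss D h g)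
          ≤ empMeasure D gstar * (empCondLoss D f gstar - empCondLoss D h gstar)) := by
  have hn' : (0:ℝ) < n := by exact_mod_cast hn
  set S : (X → Bool) → ℝ := fun g => ∑ i ∈ I1, (if g (D i).1 = true then (1:ℝ) else 0) with hS
  set T : (X → Bool) → ℝ := fun g => ∑ i ∈ I0, (if g (D i).1 = true then (1:ℝ) else 0) with hT
  have hPhi : ∀ g : X → Bool, Phi D f h g = (1/n) * (S g - T g) := by
    intro g
    unfold Phi
    congr 1
    have key : ∀ i : Fin n,
        (if g (D i).1 = true then
          (if f (D i).1 ≠ (D i).2 then (1:ℝ) else 0)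
            - (if h (D i).1 ≠ (D i).2 then (1:ℝ) else 0)
        else 0)
        = (if i ∈ I1 then (if g (D i).1 = true then (1:ℝ) else 0) else 0)
          - (if i ∈ I0 then (if g (D i).1 = true then (1:ℝ) else 0) else 0) := by
      intro i
      by_cases hg : g (D i).1 = true <;>
      by_cases h1 : h (D i).1 = (D i).2 <;>
      by_cases h2 : f (D i).1 = (D i).2 <;>
      simp [hI1, hI0, hg, h1, h2]
    rw [Finset.sum_congr rfl (fun i _ => key i), Finset.sum_sub_distrib]
    have e1 : (∑ i : Fin n, if i ∈ I1 then (if g (D i).1 = true then (1:ℝ) else 0) else 0) = S g := by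
      rw [Finset.sum_ite_mem, Finset.univ_inter]
    have e0 : (∑ i : Fin n, if i ∈ I0 then (if g (D i).1 = true then (1:ℝ) else 0) else 0) = T g := by
      rw [Finset.sum_ite_mem, Finset.univ_inter]
    rw [e1, e0]
  have hcard : (Multiset.card Dh : ℝ) = (I1.card : ℝ) + I0.card := by
    subst hDh; simp
  have hm' : (0:ℝ) < (I1.card : ℝ) + I0.card := by exact_mod_cast hmpos
  have hLoss : ∀ g : X → Bool,
      msLoss Dh g = (((I1.card : ℝ) - S g) + T g) / ((I1.card : ℝ) + I0.card) := by
    intro g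
    unfold msLoss
    rw [hcard]
    congr 1
    subst hDh
    rw [Multiset.map_add, Multiset.sum_add, Multiset.map_map, Multiset.map_map]
    have e1 : (Multiset.map ((fun q : X × Bool => if g q.1 ≠ q.2 then (1:ℝ) else 0) ∘
        (fun i => ((D i).1, true))) I1.val).sum
        = ∑ i ∈ I1, (if g (D i).1 ≠ true then (1:ℝ) else 0) := rfl
    have e0 : (Multiset.map ((fun q : X × Bool => if g q.1 ≠ q.2 then (1:ℝ) else 0) ∘
        (fun i => ((D i).1, false))) I0.val).sum
        = ∑ i ∈ I0, (if g (D i).1 ≠ false then (1:ℝ) else 0) := rfl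
    rw [e1, e0]
    have f1 : (∑ i ∈ I1, (if g (D i).1 ≠ true then (1:ℝ) else 0)) = (I1.card : ℝ) - S g := by
      have : ∀ i ∈ I1, (if g (D i).1 ≠ true then (1:ℝ) else 0)
          = 1 - (if g (D i).1 = true then (1:ℝ) else 0) := by
        intro i _; by_cases hg : g (D i).1 = true <;> simp [hg]
      rw [Finset.sum_congr rfl this, Finset.sum_sub_distrib]
      simp [hS]
    have f0 : (∑ i ∈ I0, (if g (D i).1 ≠ false then (1:ℝ) else 0)) = T g := by
      apply Finset.sum_congr rfl
      intro i _
      cases hg : g (D i).1 <;> simp [hg]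
    rw [f1, f0]
  have hPhiGe : ∀ g ∈ G, Phi D f h g ≤ Phi D f h gstar := by
    intro g hg
    have := hmin g hg
    rw [hLoss, hLoss, div_le_div_iff_of_pos_right hm'] at this
    rw [hPhi, hPhi]
    have hST : S g - T g ≤ S gstar - T gstar := by linarith
    have : (0:ℝ) ≤ 1/n := by positivity
    nlinarith
  refine ⟨hPhiGe, ?_⟩
  intro g hg hne hnes
  have hProd : ∀ g : X → Bool,
      (Finset.univ.filter fun i => g (D i).1 = true).Nonempty →
      empMeasure D g * (empCondLoss D f g - empCondLoss D h g) = Phi D f h g := by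
    intro g hne
    have hc : (0:ℝ) < ((Finset.univ.filter fun i => g (D i).1 = true).card : ℝ) := by
      exact_mod_cast Finset.card_pos.mpr hne
    unfold empMeasure empCondLoss Phi
    rw [div_sub_div_same, ← Finset.sum_sub_distrib]
    rw [Finset.sum_filter]
    field_simp
  rw [hProd g hne, hProd gstar hnes]
  exact hPhiGe g hg
end
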